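/- Let Q be a full acyclic conjunctive query and L a total lexicographic order of its variables. If Q has no disruptive trio with respect to L, then there exists a layered join tree for Q with respect to L. -/

import Mathlib

/-- Two vertices are neighbors in a hypergraph if some hyperedge contains both. -/
def Nbr {V : Type*} (E : Finset (Finset V)) (x y : V) : Prop :=
  ∃ e ∈ E, x ∈ e ∧ y ∈ e

/-- A disruptive trio w.r.t. a neighborhood relation `nbr` and an order `L`. -/
def DTrio {V : Type*} [DecidableEq V] (nbr : V → V → Prop) (L : List V) : Prop :=
  ∃ a b c, a ∈ L ∧ b ∈ L ∧ c ∈ L ∧ a ≠ b ∧ ¬ nbr a b ∧ nbr a c ∧ nbr b c ∧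
    L.idxOf a < L.idxOf c ∧ L.idxOf b < L.idxOf c

/-- Join tree: a tree on the hyperedges with the running intersection property. -/
def IsJoinTreeOf {V ι : Type*} (T : SimpleGraph ι) (lab : ι → Finset V)
    (E : Finset (Finset V)) : Prop :=
  T.IsTree ∧ (∀ i, lab i ∈ E) ∧ (∀ e ∈ E, ∃ i, lab i = e) ∧
    ∀ v : V, (T.induce {i | v ∈ lab i}).Preconnected

/-- A hypergraph is acyclic if it admits a join tree. -/
def HGAcyclic {V : Type*} (E : Finset (Finset V)) : Prop :=
  ∃ (ι : Type) (T : SimpleGraph ι) (lab : ι → Finset V), IsJoinTreeOf T lab E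

/-- A layered join tree for a full CQ with hypergraph `E` w.r.t. the variable
order `L`: a join tree (with the running intersection property) of a hypergraph
that is inclusion equivalent to `E`, with exactly one node per layer
`1, …, |L|`, where the node of layer `i` contains `L[i]` and only variables
among the first `i+1` ones, and every prefix of layers induces a (connected)
tree. -/
structure LayeredJoinTree {V : Type*} [DecidableEq V]
    (E : Finset (Finset V)) (L : List V) where
  T : SimpleGraph (Fin L.length)
  isTree : T.IsTree
  lab : Fin L.length → Finset V
  incl1 : ∀ i, ∃ e ∈ E, lab i ⊆ e
  incl2 : ∀ e ∈ E, ∃ i, e ⊆ lab i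
  rip : ∀ v : V, (T.induce {i | v ∈ lab i}).Preconnected
  layerMem : ∀ i : Fin L.length, L.get i ∈ lab i
  layerSub : ∀ i : Fin L.length, lab i ⊆ (L.take ((i : ℕ) + 1)).toFinset
  prefixConn : ∀ j : ℕ, (T.induce {i : Fin L.length | (i : ℕ) < j}).Preconnected


section LJTAux
open SimpleGraph
namespace LJT
variable {ι : Type*} {T : SimpleGraph ι}




lemma reachable_induce_of_support {s : Set ι} :
    ∀ {u v : ι} (p : T.Walk u v), (∀ x ∈ p.support, x ∈ s) →
    ∀ (hu : u ∈ s) (hv : v ∈ s), (T.induce s).Reachable ⟨u, hu⟩ ⟨v, hv⟩ := by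
  intro u v p
  induction p with
  | nil => intro _ hu hv; rfl
  | @cons u b w ha p ih =>
    intro h hu hv
    have hb : b ∈ s := h b (by simp)
    have hadj : (T.induce s).Adj ⟨u, hu⟩ ⟨b, hb⟩ := ha
    exact hadj.reachable.trans (ih (fun x hx => h x (by simp [hx])) hb hv)

lemma support_subset_of_preconnected (hT : T.IsTree) {s : Set ι}
    (hs : (T.induce s).Preconnected) {u v : ι} (hu : u ∈ s) (hv : v ∈ s)
    {p : T.Walk u v} (hp : p.IsPath) : ∀ x ∈ p.support, x ∈ s := by
  classical
  obtain ⟨w⟩ := hs ⟨u, hu⟩ ⟨v, hv⟩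
  have hw : ∀ x ∈ (w.map (SimpleGraph.Embedding.induce s).toHom).support, x ∈ s := by
    intro x hx
    rw [Walk.support_map] at hx
    obtain ⟨⟨y, hy⟩, -, rfl⟩ := List.mem_map.mp hx
    exact hy
  have huniq := hT.existsUnique_path u v
  obtain ⟨r, -, hr⟩ := huniq
  have h1 : p = r := hr p hp
  have h2 : (w.map (SimpleGraph.Embedding.induce s).toHom).bypass = r :=
    hr _ (Walk.bypass_isPath _)
  intro x hx
  exact hw x (Walk.support_bypass_subset _ (h2.symm ▸ h1 ▸ hx))


lemma median (hT : T.IsTree) : ∀ {x y : ι} (p : T.Walk x y), p.IsPath →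
    ∀ {z : ι} (q : T.Walk x z), q.IsPath →
    ∃ (m : ι) (r1 : T.Walk m y) (r2 : T.Walk m z), r1.IsPath ∧ r2.IsPath ∧
      (∀ a, a ∈ r1.support → a ∈ r2.support → a = m) ∧
      m ∈ p.support ∧ m ∈ q.support ∧
      (∀ a ∈ r1.support, a ∈ p.support) ∧ (∀ a ∈ r2.support, a ∈ q.support) := by
  classical
  intro x y p
  induction p with
  | nil =>
    intro hp z q hq
    exact ⟨_, Walk.nil, q, Walk.IsPath.nil, hq,
      fun a ha hb => by simpa using ha, by simp, q.start_mem_support,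
      by simp, fun a ha => ha⟩
  | @cons u b w ha p ih =>
    intro hp z q hq
    rw [Walk.cons_isPath_iff] at hp
    by_cases hb : b ∈ q.support
    · obtain ⟨m, r1, r2, h1, h2, h3, h4, h5, h6, h7⟩ :=
        ih hp.1 (q.dropUntil b hb) (hq.dropUntil hb)
      exact ⟨m, r1, r2, h1, h2, h3, by simp [h4], (q.support_dropUntil_subset hb) h5,
        fun a hc => by simp [h6 a hc], fun a hc => (q.support_dropUntil_subset hb) (h7 a hc)⟩
    · refine ⟨u, Walk.cons ha p, q, Walk.cons_isPath_iff _ _ |>.2 hp, hq, ?_, by simp,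
        q.start_mem_support, fun a hc => hc, fun a hc => hc⟩
      intro a hap haq
      by_contra hne
      have hap' : a ∈ p.support := by
        have := Walk.support_cons ha p ▸ hap
        rw [List.mem_cons] at this
        exact this.resolve_left hne
      have hw1 : (Walk.cons ha (p.takeUntil a hap')).IsPath := by
        rw [Walk.cons_isPath_iff]
        exact ⟨hp.1.takeUntil hap', fun hu => hp.2 (p.support_takeUntil_subset hap' hu)⟩
      have hw2 : (q.takeUntil a haq).IsPath := hq.takeUntil haq
      obtain ⟨r, -, hr⟩ := hT.existsUnique_path u a
      have heq : Walk.cons ha (p.takeUntil a hap') = q.takeUntil a haq :=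
        (hr _ hw1).trans (hr _ hw2).symm
      have hbq : b ∈ q.support := by
        have h2 : b ∈ (q.takeUntil a haq).support := by
          rw [← heq]; simp [Walk.support_cons]
        exact q.support_takeUntil_subset haq h2
      exact hb hbq

lemma exists_path_in (hT : T.IsTree) {s : Set ι} (hs : (T.induce s).Preconnected)
    {u v : ι} (hu : u ∈ s) (hv : v ∈ s) :
    ∃ p : T.Walk u v, p.IsPath ∧ ∀ x ∈ p.support, x ∈ s := by
  classical
  obtain ⟨w⟩ := hT.isConnected.preconnected u v
  exact ⟨w.bypass, w.bypass_isPath,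
    support_subset_of_preconnected hT hs hu hv w.bypass_isPath⟩

lemma helly3 (hT : T.IsTree) {A B C : Set ι}
    (hA : (T.induce A).Preconnected) (hB : (T.induce B).Preconnected)
    (hC : (T.induce C).Preconnected) {x y z : ι}
    (hxA : x ∈ A) (hxB : x ∈ B) (hyA : y ∈ A) (hyC : y ∈ C)
    (hzB : z ∈ B) (hzC : z ∈ C) : ∃ m, m ∈ A ∧ m ∈ B ∧ m ∈ C := by
  classical
  obtain ⟨p, hp, hpA⟩ := exists_path_in hT hA hxA hyA
  obtain ⟨q, hq, hqB⟩ := exists_path_in hT hB hxB hzB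
  obtain ⟨m, r1, r2, h1, h2, h3, h4, h5, h6, h7⟩ := median hT p hp q hq
  refine ⟨m, hpA m h4, hqB m h5, ?_⟩
  set w : T.Walk y z := r1.reverse.append r2 with hw
  have hmw : m ∈ w.support := by
    rw [hw, Walk.support_append]
    exact List.mem_append_left _ (by rw [Walk.support_reverse]; simpa using r1.end_mem_support)
  have hwp : w.IsPath := by
    rw [Walk.isPath_def, hw, Walk.support_append, Walk.support_reverse]
    refine List.Nodup.append (by simpa using h1.support_nodup) (h2.support_nodup.sublist (List.tail_sublist _)) ?_
    intro a ha hat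
    have ha1 : a ∈ r1.support := by simpa using ha
    have ha2 : a ∈ r2.support := List.mem_of_mem_tail hat
    have := h3 a ha1 ha2
    subst this
    have hnd := h2.support_nodup
    rw [r2.support_eq_cons] at hnd
    exact (List.nodup_cons.mp hnd).1 hat
  exact support_subset_of_preconnected hT hC hyC hzC hwp m hmw

lemma inter_preconn (hT : T.IsTree) {A B : Set ι}
    (hA : (T.induce A).Preconnected) (hB : (T.induce B).Preconnected) :
    (T.induce (A ∩ B)).Preconnected := by
  rintro ⟨u, huA, huB⟩ ⟨v, hvA, hvB⟩
  obtain ⟨p, hp, hpA⟩ := exists_path_in hT hA huA hvA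
  have hpB := support_subset_of_preconnected hT hB huB hvB hp
  exact reachable_induce_of_support (s := A ∩ B) p (fun x hx => ⟨hpA x hx, hpB x hx⟩) ⟨huA, huB⟩ ⟨hvA, hvB⟩

lemma helly (hT : T.IsTree) : ∀ (n : ℕ) (F : Finset (Set ι)), F.card ≤ n →
    (∀ s ∈ F, (T.induce s).Preconnected) →
    (∀ s ∈ F, ∀ t ∈ F, (s ∩ t).Nonempty) → F.Nonempty →
    ∃ x, ∀ s ∈ F, x ∈ s := by
  classical
  intro n
  induction n with
  | zero =>
    intro F hc _ _ hne
    rw [Nat.le_zero, Finset.card_eq_zero] at hc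
    exact absurd (hc ▸ hne) (by simp)
  | succ n ih =>
    intro F hc hconn hpair hne
    by_cases h1 : F.card ≤ 1
    · obtain ⟨s, hs⟩ := hne
      obtain ⟨x, hx⟩ := hpair s hs s hs
      exact ⟨x, fun t ht => (Finset.card_le_one.mp h1 t ht s hs) ▸ hx.1⟩
    · push_neg at h1
      obtain ⟨s, hs, t, ht, hst⟩ := Finset.one_lt_card.mp h1
      set F' : Finset (Set ι) := insert (s ∩ t) ((F.erase s).erase t) with hF'
      have htF : t ∈ F.erase s := Finset.mem_erase.mpr ⟨fun h => hst h.symm, ht⟩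
      have hcard : F'.card ≤ n := by
        rw [hF']
        have h2 := Finset.card_insert_le (s ∩ t) ((F.erase s).erase t)
        have h3 := Finset.card_erase_of_mem htF
        have h4 := Finset.card_erase_of_mem hs
        omega
      have hmemF : ∀ u ∈ (F.erase s).erase t, u ∈ F :=
        fun u hu => Finset.mem_of_mem_erase (Finset.mem_of_mem_erase hu)
      have hconn' : ∀ u ∈ F', (T.induce u).Preconnected := by
        intro u hu
        rcases Finset.mem_insert.mp hu with rfl | hu
        · exact inter_preconn hT (hconn s hs) (hconn t ht)
        · exact hconn u (hmemF u hu)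
      have hmix : ∀ u ∈ F, ((s ∩ t) ∩ u).Nonempty := by
        intro u hu
        obtain ⟨x, hx⟩ := hpair s hs t ht
        obtain ⟨y, hy⟩ := hpair s hs u hu
        obtain ⟨z, hz⟩ := hpair t ht u hu
        obtain ⟨m, hms, hmt, hmu⟩ := helly3 hT (hconn s hs) (hconn t ht) (hconn u hu)
          hx.1 hx.2 hy.1 hy.2 hz.1 hz.2
        exact ⟨m, ⟨hms, hmt⟩, hmu⟩
      have hpair' : ∀ u ∈ F', ∀ u' ∈ F', (u ∩ u').Nonempty := by
        intro u hu u' hu'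
        rcases Finset.mem_insert.mp hu with rfl | hu <;>
          rcases Finset.mem_insert.mp hu' with rfl | hu'
        · obtain ⟨x, hx⟩ := hpair s hs t ht; exact ⟨x, hx, hx⟩
        · exact hmix u' (hmemF u' hu')
        · obtain ⟨x, hx1, hx2⟩ := hmix u (hmemF u hu); exact ⟨x, hx2, hx1⟩
        · exact hpair u (hmemF u hu) u' (hmemF u' hu')
      obtain ⟨x, hx⟩ := ih F' hcard hconn' hpair' ⟨s ∩ t, Finset.mem_insert_self _ _⟩
      have hxst := hx (s ∩ t) (Finset.mem_insert_self _ _)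
      refine ⟨x, fun u hu => ?_⟩
      by_cases hus : u = s
      · exact hus ▸ hxst.1
      by_cases hut : u = t
      · exact hut ▸ hxst.2
      exact hx u (Finset.mem_insert_of_mem (Finset.mem_erase.mpr ⟨hut, Finset.mem_erase.mpr ⟨hus, hu⟩⟩))
lemma conformal {V : Type*} [DecidableEq V] {E : Finset (Finset V)} (hacyc : HGAcyclic E)
    (S : Finset V) (hSne : S.Nonempty)
    (hpair : ∀ a ∈ S, ∀ b ∈ S, Nbr E a b) : ∃ e ∈ E, ∀ v ∈ S, v ∈ e := by
  classical
  obtain ⟨ι, T, lab0, hTree, hlab, hsurj, hrip⟩ := hacyc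
  set F : Finset (Set ι) := S.image (fun v => {t | v ∈ lab0 t}) with hF
  have hconn : ∀ s ∈ F, (T.induce s).Preconnected := by
    intro s hs
    obtain ⟨v, -, rfl⟩ := Finset.mem_image.mp hs
    exact hrip v
  have hpair' : ∀ s ∈ F, ∀ t ∈ F, (s ∩ t).Nonempty := by
    intro s hs t ht
    obtain ⟨a, ha, rfl⟩ := Finset.mem_image.mp hs
    obtain ⟨b, hb, rfl⟩ := Finset.mem_image.mp ht
    obtain ⟨e, he, hae, hbe⟩ := hpair a ha b hb
    obtain ⟨t0, ht0⟩ := hsurj e he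
    exact ⟨t0, by simp [Set.mem_setOf_eq, ht0, hae, hbe]⟩
  obtain ⟨x, hx⟩ := helly hTree F.card F le_rfl hconn hpair' (hSne.image _)
  exact ⟨lab0 x, hlab x, fun v hv => hx _ (Finset.mem_image_of_mem _ hv)⟩

lemma indexOf_lt_of_mem_take {α : Type*} [DecidableEq α] :
    ∀ (l : List α) (m : ℕ) (v : α), v ∈ l.take m → l.idxOf v < m := by
  intro l
  induction l with
  | nil => intro m v hv; simp at hv
  | cons a l ih =>
    intro m v hv
    cases m with
    | zero => simp at hv
    | succ m =>
      rw [List.take_succ_cons, List.mem_cons] at hv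
      by_cases hva : v = a
      · subst hva; simp [List.idxOf_cons_self]
      · have hv' : v ∈ l.take m := hv.resolve_left hva
        have := ih m v hv'
        rw [List.idxOf_cons_ne _ (fun h => hva h.symm)]
        omega

lemma mem_take_of_indexOf_lt {α : Type*} [DecidableEq α] :
    ∀ (l : List α) (m : ℕ) (v : α), v ∈ l → l.idxOf v < m → v ∈ l.take m := by
  intro l
  induction l with
  | nil => intro m v hv; simp at hv
  | cons a l ih =>
    intro m v hv hlt
    by_cases hva : v = a
    · subst hva
      cases m with
      | zero => simp [List.idxOf_cons_self] at hlt
      | succ m => simp [List.take_succ_cons]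
    · rw [List.mem_cons] at hv
      have hv' : v ∈ l := hv.resolve_left hva
      rw [List.idxOf_cons_ne _ (fun h => hva h.symm)] at hlt
      cases m with
      | zero => omega
      | succ m =>
        rw [List.take_succ_cons, List.mem_cons]
        exact Or.inr (ih m v hv' (by omega))

section Main

variable {V : Type*} [DecidableEq V]

noncomputable def labF (E : Finset (Finset V)) (L : List V) (i : Fin L.length) : Finset V :=
  @Finset.filter V (fun u => Nbr E u (L.get i)) (Classical.decPred _)
    (L.take ((i : ℕ) + 1)).toFinset

lemma mem_labF {E : Finset (Finset V)} {L : List V} {i : Fin L.length} {v : V} :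
    v ∈ labF E L i ↔ v ∈ L.take ((i : ℕ) + 1) ∧ Nbr E v (L.get i) := by
  simp [labF, Finset.mem_filter, List.mem_toFinset]

noncomputable def cand (E : Finset (Finset V)) (L : List V) (i : Fin L.length) :
    Finset (Fin L.length) :=
  @Finset.filter _ (fun j => j < i ∧ Nbr E (L.get j) (L.get i)) (Classical.decPred _)
    Finset.univ

lemma mem_cand {E : Finset (Finset V)} {L : List V} {i j : Fin L.length} :
    j ∈ cand E L i ↔ j < i ∧ Nbr E (L.get j) (L.get i) := by
  simp [cand, Finset.mem_filter]

noncomputable def parF (E : Finset (Finset V)) (L : List V) (i : Fin L.length) :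
    Fin L.length :=
  if h : (cand E L i).Nonempty then (cand E L i).max' h
  else ⟨(i : ℕ) - 1, by have := i.isLt; omega⟩

lemma parF_lt {E : Finset (Finset V)} {L : List V} {i : Fin L.length} (h : (i : ℕ) ≠ 0) :
    parF E L i < i := by
  unfold parF
  split_ifs with hc
  · exact (mem_cand.mp ((cand E L i).max'_mem hc)).1
  · exact Fin.mk_lt_of_lt_val (by omega)

lemma parF_zero {E : Finset (Finset V)} {L : List V} {i : Fin L.length} (h : (i : ℕ) = 0) :
    parF E L i = i := by
  unfold parF
  split_ifs with hc
  · exfalso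
    obtain ⟨j, hj⟩ := hc
    have := (mem_cand.mp hj).1
    rw [Fin.lt_def, h] at this
    omega
  · exact Fin.ext (by simp [h])

lemma parF_spec {E : Finset (Finset V)} {L : List V} {i : Fin L.length}
    (hex : (cand E L i).Nonempty) :
    parF E L i ∈ cand E L i ∧ ∀ j ∈ cand E L i, j ≤ parF E L i := by
  unfold parF
  rw [dif_pos hex]
  exact ⟨(cand E L i).max'_mem hex, fun j hj => (cand E L i).le_max' j hj⟩

noncomputable def TF (E : Finset (Finset V)) (L : List V) : SimpleGraph (Fin L.length) :=
  SimpleGraph.fromRel (fun a b => parF E L b = a)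

lemma TF_adj {E : Finset (Finset V)} {L : List V} {a b : Fin L.length} :
    (TF E L).Adj a b ↔ a ≠ b ∧ (parF E L b = a ∨ parF E L a = b) := by
  simp [TF, SimpleGraph.fromRel_adj]

lemma TF_adj_par {E : Finset (Finset V)} {L : List V} {i : Fin L.length} (h : (i : ℕ) ≠ 0) :
    (TF E L).Adj i (parF E L i) :=
  TF_adj.mpr ⟨(parF_lt h).ne', Or.inr rfl⟩

lemma asc {E : Finset (Finset V)} {L : List V} :
    ∀ {b w : Fin L.length} (p : (TF E L).Walk b w), p.IsPath →
      parF E L b ∉ p.support → ((b : ℕ) ≤ (w : ℕ) ∧ ∀ x ∈ p.support, (x : ℕ) ≤ (w : ℕ)) := by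
  intro b w p
  induction p with
  | nil =>
    intro _ _
    exact ⟨le_rfl, fun x hx => by simp at hx; simp [hx]⟩
  | @cons b c w h p ih =>
    intro hp hpar
    rw [Walk.cons_isPath_iff] at hp
    obtain ⟨hbc, hor⟩ := TF_adj.mp h
    rcases hor with hco | hco
    · -- parF c = b : ascending step
      have hc0 : (c : ℕ) ≠ 0 := by
        intro h0
        exact hbc ((parF_zero h0 ▸ hco).symm)
      have hblt : b < c := hco ▸ parF_lt hc0
      have ihp := ih hp.1 (by rw [hco]; exact hp.2)
      refine ⟨le_trans (le_of_lt hblt) ihp.1, ?_⟩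
      intro x hx
      rw [Walk.support_cons, List.mem_cons] at hx
      rcases hx with rfl | hx
      · exact le_trans (le_of_lt hblt) ihp.1
      · exact ihp.2 x hx
    · -- parF b = c : contradicts hpar
      have hmem : parF E L b ∈ (Walk.cons h p).support := by
        rw [Walk.support_cons, List.mem_cons, hco]
        exact Or.inr p.start_mem_support
      exact absurd hmem hpar

lemma maxEnd {E : Finset (Finset V)} {L : List V} :
    ∀ {v w : Fin L.length} (p : (TF E L).Walk v w), p.IsPath →
      ∀ x ∈ p.support, (x : ℕ) ≤ max (v : ℕ) (w : ℕ) := by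
  intro v w p
  induction p with
  | nil => intro _ x hx; simp at hx; simp [hx]
  | @cons v b w h p ih =>
    intro hp x hx
    rw [Walk.cons_isPath_iff] at hp
    obtain ⟨hvb, hor⟩ := TF_adj.mp h
    rw [Walk.support_cons, List.mem_cons] at hx
    rcases hx with rfl | hx
    · exact le_max_left _ _
    rcases hor with hco | hco
    · -- parF b = v : ascending, use asc
      have := (asc p hp.1 (by rw [hco]; exact hp.2)).2 x hx
      omega
    · -- parF v = b : descending
      have hv0 : (v : ℕ) ≠ 0 := by
        intro h0
        exact hvb (parF_zero h0 ▸ hco)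
      have hblt : b < v := hco ▸ parF_lt hv0
      have := ih hp.1 x hx
      rw [Fin.lt_def] at hblt
      omega

lemma pathUnique {E : Finset (Finset V)} {L : List V} :
    ∀ (N : ℕ) {v w : Fin L.length} (p q : (TF E L).Walk v w),
      p.IsPath → q.IsPath → max (v : ℕ) (w : ℕ) ≤ N → p = q := by
  intro N
  induction N with
  | zero =>
    intro v w p q hp hq hm
    have hvw : v = w := Fin.ext (by omega)
    subst hvw
    have h1 : (⟨p, hp⟩ : (TF E L).Path v v) = SimpleGraph.Path.nil := SimpleGraph.Path.loop_eq _
    have h2 : (⟨q, hq⟩ : (TF E L).Path v v) = SimpleGraph.Path.nil := SimpleGraph.Path.loop_eq _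
    have := h1.trans h2.symm
    exact congrArg Subtype.val this
  | succ N ih =>
    intro v w p q hp hq hm
    have key : ∀ {v w : Fin L.length} (p q : (TF E L).Walk v w), (v : ℕ) < (w : ℕ) →
        p.IsPath → q.IsPath → max (v : ℕ) (w : ℕ) ≤ N + 1 → p = q := by
      clear hm hp hq p q v w
      intro v w p q hvw hp hq hm
      have hwv : w ≠ v := fun h => by rw [h] at hvw; omega
      have hw0 : (w : ℕ) ≠ 0 := by omega
      have hdec : ∀ (r : (TF E L).Walk v w), r.IsPath →
          ∃ (r1 : (TF E L).Walk (parF E L w) v), r1.IsPath ∧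
            r.reverse = Walk.cons (TF_adj_par hw0) r1 := by
        intro r hr
        have hrrev : r.reverse.IsPath := hr.reverse
        have hnn : ¬ r.reverse.Nil := Walk.not_nil_of_ne hwv
        obtain ⟨c, hadj, r1, hr1⟩ := Walk.not_nil_iff.mp hnn
        have hcpar : c = parF E L w := by
          obtain ⟨hwc, hor⟩ := TF_adj.mp hadj
          rcases hor with hco | hco
          · exfalso
            have hc0 : (c : ℕ) ≠ 0 := fun h0 => hwc (hco.symm.trans (parF_zero h0))
            have hwlt : w < c := hco ▸ parF_lt hc0
            have hcs : c ∈ r.support := by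
              have : c ∈ r.reverse.support := by rw [hr1]; simp
              rwa [Walk.support_reverse, List.mem_reverse] at this
            have := maxEnd r hr c hcs
            rw [Fin.lt_def] at hwlt
            omega
          · exact hco.symm
        subst hcpar
        have hr1p : r1.IsPath := by
          rw [hr1] at hrrev
          exact ((Walk.cons_isPath_iff _ _).mp hrrev).1
        exact ⟨r1, hr1p, hr1⟩
      obtain ⟨p1, hp1, hp1e⟩ := hdec p hp
      obtain ⟨q1, hq1, hq1e⟩ := hdec q hq
      have hparlt : (parF E L w : ℕ) < (w : ℕ) := parF_lt (by omega)
      have heq : p1 = q1 := ih p1 q1 hp1 hq1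
        (show max ((parF E L w : ℕ)) ((v : ℕ)) ≤ N by omega)
      have : p.reverse = q.reverse := by rw [hp1e, hq1e, heq]
      exact Walk.reverse_injective this
    rcases Nat.lt_trichotomy (v : ℕ) (w : ℕ) with hlt | heq | hgt
    · exact key p q hlt hp hq hm
    · have hvw : v = w := Fin.ext heq
      subst hvw
      have h1 : (⟨p, hp⟩ : (TF E L).Path v v) = SimpleGraph.Path.nil := SimpleGraph.Path.loop_eq _
      have h2 : (⟨q, hq⟩ : (TF E L).Path v v) = SimpleGraph.Path.nil := SimpleGraph.Path.loop_eq _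
      exact congrArg Subtype.val (h1.trans h2.symm)
    · have := key p.reverse q.reverse hgt hp.reverse hq.reverse (by omega)
      exact Walk.reverse_injective this

end Main
end LJT
end LJTAux

/-- If a full acyclic CQ has no disruptive trio with respect to a
total lexicographic order `L` of its variables, then it has a layered join tree
with respect to `L`. -/
theorem exists_layered_join_tree {V : Type*} [DecidableEq V]
    (E : Finset (Finset V)) (L : List V)
    (hnd : L.Nodup) (hne : L ≠ [])
    (hcover : ∀ e ∈ E, ∀ v ∈ e, v ∈ L)
    (hvars : ∀ v ∈ L, ∃ e ∈ E, v ∈ e)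
    (hacyc : HGAcyclic E)
    (htrio : ¬ DTrio (Nbr E) L) :
    Nonempty (LayeredJoinTree E L) := by
  classical
  have hn : 0 < L.length := List.length_pos_iff.mpr hne
  have hidx : ∀ i : Fin L.length, L.idxOf (L.get i) = (i : ℕ) :=
    fun i => List.get_idxOf hnd i
  have hgetmem : ∀ i : Fin L.length, L.get i ∈ L := fun i => List.get_mem L i
  have hNbrSymm : ∀ a b : V, Nbr E a b → Nbr E b a := by
    rintro a b ⟨e, he, h1, h2⟩; exact ⟨e, he, h2, h1⟩
  have hNbrSelf : ∀ v ∈ L, Nbr E v v := by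
    intro v hv; obtain ⟨e, he, hve⟩ := hvars v hv; exact ⟨e, he, hve, hve⟩
  have hmemlab : ∀ i : Fin L.length, L.get i ∈ LJT.labF E L i := by
    intro i
    rw [LJT.mem_labF]
    exact ⟨LJT.mem_take_of_indexOf_lt L _ _ (hgetmem i) (by rw [hidx]; omega),
      hNbrSelf _ (hgetmem i)⟩
  have hlabL : ∀ (i : Fin L.length) (v : V), v ∈ LJT.labF E L i → v ∈ L := by
    intro i v hv
    exact List.take_subset _ _ ((LJT.mem_labF).mp hv).1
  have hlabIdx : ∀ (i : Fin L.length) (v : V), v ∈ LJT.labF E L i →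
      L.idxOf v ≤ (i : ℕ) := by
    intro i v hv
    have := LJT.indexOf_lt_of_mem_take L _ _ ((LJT.mem_labF).mp hv).1
    omega
  have hgetne : ∀ (v : V), v ∈ L → ∀ i : Fin L.length, v ≠ L.get i →
      L.idxOf v ≠ (i : ℕ) := by
    intro v hvL i hvne hEq
    apply hvne
    have hlt : L.idxOf v < L.length := List.idxOf_lt_length_iff.mpr hvL
    have h2 : L.get ⟨L.idxOf v, hlt⟩ = v := List.idxOf_get hlt
    rw [← h2]
    congr 1
    exact Fin.ext hEq
  have hclique : ∀ i : Fin L.length, ∀ a ∈ LJT.labF E L i, ∀ b ∈ LJT.labF E L i,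
      Nbr E a b := by
    intro i a ha b hb
    have haL := hlabL i a ha
    have hbL := hlabL i b hb
    have haN := (LJT.mem_labF.mp ha).2
    have hbN := (LJT.mem_labF.mp hb).2
    by_cases hab : a = b
    · subst hab; exact hNbrSelf a haL
    by_contra hN
    have hai : a ≠ L.get i := by rintro rfl; exact hN (hNbrSymm _ _ hbN)
    have hbi : b ≠ L.get i := by rintro rfl; exact hN haN
    have ha' := hlabIdx i a ha
    have hb' := hlabIdx i b hb
    have ha'' := hgetne a haL i hai
    have hb'' := hgetne b hbL i hbi
    exact htrio ⟨a, b, L.get i, haL, hbL, hgetmem i, hab, hN, haN, hbN,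
      by rw [hidx]; omega, by rw [hidx]; omega⟩
  have hparmem : ∀ (v : V), v ∈ L → ∀ (i : Fin L.length), v ∈ LJT.labF E L i →
      L.idxOf v ≠ (i : ℕ) →
      v ∈ LJT.labF E L (LJT.parF E L i) ∧ LJT.parF E L i < i := by
    intro v hvL i hvi hne'
    have hklt : L.idxOf v < L.length := List.idxOf_lt_length_iff.mpr hvL
    have hgetk : L.get ⟨L.idxOf v, hklt⟩ = v := List.idxOf_get hklt
    have hkle : L.idxOf v ≤ (i : ℕ) := hlabIdx i v hvi
    have hki : (⟨L.idxOf v, hklt⟩ : Fin L.length) < i := Fin.lt_def.mpr (show L.idxOf v < (i : ℕ) by omega)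
    have hNvi : Nbr E v (L.get i) := (LJT.mem_labF.mp hvi).2
    have hcand : (⟨L.idxOf v, hklt⟩ : Fin L.length) ∈ LJT.cand E L i :=
      LJT.mem_cand.mpr ⟨hki, by rw [hgetk]; exact hNvi⟩
    obtain ⟨hm, hmaxc⟩ := LJT.parF_spec (E := E) (L := L) (i := i) ⟨_, hcand⟩
    obtain ⟨hmi, hNmi⟩ := LJT.mem_cand.mp hm
    have hkm : L.idxOf v ≤ ((LJT.parF E L i : ℕ)) :=
      Fin.le_def.mp (hmaxc _ hcand)
    refine ⟨?_, hmi⟩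
    rw [LJT.mem_labF]
    refine ⟨LJT.mem_take_of_indexOf_lt L _ _ hvL (by omega), ?_⟩
    by_cases hkm' : L.idxOf v = ((LJT.parF E L i : ℕ))
    · have : L.get (LJT.parF E L i) = v := by
        rw [← hgetk]; congr 1; exact Fin.ext hkm'.symm
      rw [this]; exact hNbrSelf v hvL
    · by_contra hN
      apply htrio
      have hvm : v ≠ L.get (LJT.parF E L i) := by
        rintro rfl
        exact hkm' (hidx _)
      have hmi' : (LJT.parF E L i : ℕ) < (i : ℕ) := Fin.lt_def.mp hmi
      exact ⟨v, L.get (LJT.parF E L i), L.get i, hvL, hgetmem _, hgetmem i, hvm, hN,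
        hNvi, hNmi, by rw [hidx]; omega, by rw [hidx, hidx]; omega⟩
  -- connectivity of the whole tree
  have reach0 : ∀ (N : ℕ) (i : Fin L.length), (i : ℕ) ≤ N →
      (LJT.TF E L).Reachable i ⟨0, hn⟩ := by
    intro N
    induction N with
    | zero =>
      intro i hi
      have h0 : i = ⟨0, hn⟩ := Fin.ext (show (i : ℕ) = 0 by omega)
      rw [h0]
    | succ N ih =>
      intro i hi
      by_cases hi0 : (i : ℕ) = 0
      · have h0 : i = ⟨0, hn⟩ := Fin.ext (show (i : ℕ) = 0 by omega)
        rw [h0]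
      · have hlt := Fin.lt_def.mp (LJT.parF_lt (E := E) (L := L) hi0)
        exact (LJT.TF_adj_par hi0).reachable.trans (ih _ (by omega))
  have hconn : (LJT.TF E L).Connected := by
    haveI : Nonempty (Fin L.length) := ⟨⟨0, hn⟩⟩
    exact ⟨fun u v => (reach0 u u le_rfl).trans (reach0 v v le_rfl).symm⟩
  have htree : (LJT.TF E L).IsTree := by
    constructor
    · exact hconn
    · apply SimpleGraph.isAcyclic_of_path_unique
      intro v w p q
      exact Subtype.ext (LJT.pathUnique (max (v : ℕ) (w : ℕ)) p.1 q.1 p.2 q.2 le_rfl)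
  refine ⟨⟨LJT.TF E L, htree, LJT.labF E L, ?_, ?_, ?_, hmemlab, ?_, ?_⟩⟩
  · -- incl1
    intro i
    obtain ⟨e, he, hsub⟩ := LJT.conformal hacyc (LJT.labF E L i)
      ⟨L.get i, hmemlab i⟩ (hclique i)
    exact ⟨e, he, fun v hv => hsub v hv⟩
  · -- incl2
    intro e he
    rcases Finset.eq_empty_or_nonempty e with rfl | hene
    · exact ⟨⟨0, hn⟩, by simp⟩
    obtain ⟨b, hb, hmax⟩ := Finset.exists_max_image e (fun v => L.idxOf v) hene
    have hbL := hcover e he b hb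
    have hblt : L.idxOf b < L.length := List.idxOf_lt_length_iff.mpr hbL
    refine ⟨⟨L.idxOf b, hblt⟩, fun v hv => ?_⟩
    have hvL := hcover e he v hv
    rw [LJT.mem_labF]
    constructor
    · refine LJT.mem_take_of_indexOf_lt L _ _ hvL ?_
      have h := hmax v hv
      exact show L.idxOf v < L.idxOf b + 1 by omega
    · have hgb : L.get ⟨L.idxOf b, hblt⟩ = b := List.idxOf_get hblt
      rw [hgb]
      exact ⟨e, he, hv, hb⟩
  · -- rip
    intro v
    by_cases hvL : v ∈ L
    · have hklt : L.idxOf v < L.length := List.idxOf_lt_length_iff.mpr hvL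
      have hgetk : L.get ⟨L.idxOf v, hklt⟩ = v := List.idxOf_get hklt
      have hvk : v ∈ LJT.labF E L ⟨L.idxOf v, hklt⟩ := by
        rw [LJT.mem_labF]
        refine ⟨LJT.mem_take_of_indexOf_lt L _ _ hvL (Nat.lt_succ_self _), ?_⟩
        rw [hgetk]
        exact hNbrSelf v hvL
      have reach : ∀ (N : ℕ) (i : Fin L.length) (hi : v ∈ LJT.labF E L i), (i : ℕ) ≤ N →
          ((LJT.TF E L).induce {j | v ∈ LJT.labF E L j}).Reachable ⟨i, hi⟩
            ⟨⟨L.idxOf v, hklt⟩, hvk⟩ := by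
        intro N
        induction N with
        | zero =>
          intro i hi hile
          have hle := hlabIdx i v hi
          have h0 : i = ⟨L.idxOf v, hklt⟩ := Fin.ext (show (i : ℕ) = L.idxOf v by omega)
          rw [show (⟨i, hi⟩ : {j : Fin L.length // v ∈ LJT.labF E L j}) =
            ⟨⟨L.idxOf v, hklt⟩, hvk⟩ from Subtype.ext h0]
        | succ N ih =>
          intro i hi hile
          by_cases hik : L.idxOf v = (i : ℕ)
          · have h0 : i = ⟨L.idxOf v, hklt⟩ := Fin.ext (show (i : ℕ) = L.idxOf v by omega)
            rw [show (⟨i, hi⟩ : {j : Fin L.length // v ∈ LJT.labF E L j}) =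
              ⟨⟨L.idxOf v, hklt⟩, hvk⟩ from Subtype.ext h0]
          · obtain ⟨hpm, hplt⟩ := hparmem v hvL i hi hik
            have hi0 : (i : ℕ) ≠ 0 := by
              intro h0
              have := hlabIdx i v hi
              omega
            have hadj : ((LJT.TF E L).induce {j | v ∈ LJT.labF E L j}).Adj
                ⟨i, hi⟩ ⟨LJT.parF E L i, hpm⟩ := LJT.TF_adj_par hi0
            have hlt := Fin.lt_def.mp hplt
            exact hadj.reachable.trans (ih _ hpm (by omega))
      rintro ⟨i, hi⟩ ⟨j, hj⟩
      exact (reach i i hi le_rfl).trans (reach j j hj le_rfl).symm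
    · rintro ⟨i, hi⟩
      exact absurd (hlabL i v hi) hvL
  · -- layerSub
    intro i v hv
    exact List.mem_toFinset.mpr ((LJT.mem_labF.mp hv).1)
  · -- prefixConn
    intro j
    rintro ⟨i, hi⟩ ⟨i', hi'⟩
    have hij : (i : ℕ) < j := hi
    have hj0 : 0 < j := by omega
    have hz : (⟨0, hn⟩ : Fin L.length) ∈ {x : Fin L.length | (x : ℕ) < j} := hj0
    have reach : ∀ (N : ℕ) (a : Fin L.length) (ha : (a : ℕ) < j), (a : ℕ) ≤ N →
        ((LJT.TF E L).induce {x : Fin L.length | (x : ℕ) < j}).Reachable ⟨a, ha⟩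
          ⟨⟨0, hn⟩, hz⟩ := by
      intro N
      induction N with
      | zero =>
        intro a ha hale
        have h0 : a = ⟨0, hn⟩ := Fin.ext (show (a : ℕ) = 0 by omega)
        rw [show (⟨a, ha⟩ : {x : Fin L.length // (x : ℕ) < j}) = ⟨⟨0, hn⟩, hz⟩ from
          Subtype.ext h0]
      | succ N ih =>
        intro a ha hale
        by_cases ha0 : (a : ℕ) = 0
        · have h0 : a = ⟨0, hn⟩ := Fin.ext (show (a : ℕ) = 0 by omega)
          rw [show (⟨a, ha⟩ : {x : Fin L.length // (x : ℕ) < j}) = ⟨⟨0, hn⟩, hz⟩ from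
            Subtype.ext h0]
        · have hlt := Fin.lt_def.mp (LJT.parF_lt (E := E) (L := L) ha0)
          have hpj : (LJT.parF E L a : ℕ) < j := by omega
          have hadj : ((LJT.TF E L).induce {x : Fin L.length | (x : ℕ) < j}).Adj
              ⟨a, ha⟩ ⟨LJT.parF E L a, hpj⟩ := LJT.TF_adj_par ha0
          exact hadj.reachable.trans (ih _ hpj (by omega))
    exact (reach i i hi le_rfl).trans (reach i' i' hi' le_rfl).symm
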